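/- For all n ≥ 1 and m ≥ 0, det(([i+j+m]_q!)_{i,j=0}^{n-1}) = q^{2·binom(n,3) + (m+1)·binom(n,2)} · ∏_{k=0}^{n-1} [k+m]_q! · [k]_q!, where [k]_q = (1-q^k)/(1-q) and [k]_q! = ∏_{j=1}^{k}[j]_q, over the field ℚ(q) of rational functions. -/

import Mathlib

/-- The q-integer `[k]_q = (1 - q^k)/(1 - q)` in `ℚ(q)`. -/
noncomputable def qInt (k : ℕ) : RatFunc ℚ :=
  (1 - RatFunc.X ^ k) / (1 - RatFunc.X)

/-- The q-factorial `[k]_q! = ∏_{j=1}^{k} [j]_q`. -/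
noncomputable def qFact (k : ℕ) : RatFunc ℚ :=
  ∏ j ∈ Finset.Icc 1 k, qInt j

lemma qInt_zero : qInt 0 = 0 := by simp [qInt]

lemma qInt_add (a b : ℕ) : qInt (a + b) = qInt a + RatFunc.X ^ a * qInt b := by
  unfold qInt
  rw [← mul_div_assoc, ← add_div, pow_add]
  congr 1
  ring

lemma qFact_succ (k : ℕ) : qFact (k + 1) = qFact k * qInt (k + 1) := by
  unfold qFact
  rw [Finset.prod_Icc_succ_top (Nat.succ_le_succ k.zero_le)]

lemma qFact_eq_prod_range (k : ℕ) : qFact k = ∏ j ∈ Finset.range k, qInt (j + 1) := by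
  induction k with
  | zero => simp [qFact]
  | succ k ih => rw [qFact_succ, ih, Finset.prod_range_succ]

lemma choose_two_succ (n : ℕ) : (n+1).choose 2 = n.choose 2 + n := by
  rw [Nat.choose_succ_succ, Nat.choose_one_right]; norm_num; omega

lemma choose_three_succ (n : ℕ) : (n+1).choose 3 = n.choose 3 + n.choose 2 := by
  rw [Nat.choose_succ_succ]; norm_num; omega

lemma sum_range_id' (n : ℕ) : ∑ i ∈ Finset.range n, i = n.choose 2 := by
  induction n with
  | zero => simp
  | succ n ih => rw [Finset.sum_range_succ, ih, choose_two_succ]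

lemma key_step (i j m : ℕ) :
    qFact ((i + 1) + j + m)
      = RatFunc.X ^ (i + 1 + m) * qInt j * qFact (i + j + m)
        + qInt (i + 1 + m) * qFact (i + j + m) := by
  have h1 : (i + 1) + j + m = (i + j + m) + 1 := by omega
  have h2 : (i + j + m) + 1 = (i + 1 + m) + j := by omega
  rw [h1, qFact_succ, h2, qInt_add]
  ring

lemma key (n m : ℕ) :
    Matrix.det (Matrix.of (fun i j : Fin n => qFact (i.1 + j.1 + m)))
      = RatFunc.X ^ (2 * n.choose 3 + (m + 1) * n.choose 2) *
          ∏ k ∈ Finset.range n, qFact (k + m) * qFact k := by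
  induction n generalizing m with
  | zero => simp
  | succ n ih =>
    -- row reduction
    set B : Matrix (Fin (n+1)) (Fin (n+1)) (RatFunc ℚ) :=
      Matrix.of (fun i j : Fin (n+1) =>
        Fin.cases (qFact (j.1 + m))
          (fun i' : Fin n => RatFunc.X ^ (i'.1 + 1 + m) * qInt j.1 * qFact (i'.1 + j.1 + m)) i)
      with hB
    have hdet : Matrix.det (Matrix.of (fun i j : Fin (n+1) => qFact (i.1 + j.1 + m)))
        = Matrix.det B := by
      apply Matrix.det_eq_of_forall_row_eq_smul_add_pred (fun i : Fin n => qInt (i.1 + 1 + m))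
      · intro j; simp [hB]
      · intro i j
        simp only [hB, Matrix.of_apply, Fin.cases_succ, Fin.val_succ, Fin.coe_castSucc]
        exact key_step i.1 j.1 m
    rw [hdet]
    rw [Matrix.det_succ_column_zero]
    have hzero : ∀ i : Fin n, B i.succ 0 = 0 := by
      intro i
      simp [hB, qInt_zero]
    rw [Fin.sum_univ_succ]
    simp only [hzero, mul_zero, zero_mul, Finset.sum_const_zero, add_zero]
    have hsub : (B.submatrix (Fin.succAbove 0) Fin.succ)
        = Matrix.of (fun i j : Fin n =>
            RatFunc.X ^ (i.1 + 1 + m) * (qInt (j.1 + 1) *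
              qFact (i.1 + j.1 + (m + 1)))) := by
      ext i j
      simp only [Matrix.submatrix_apply, Fin.zero_succAbove, hB, Matrix.of_apply,
        Fin.cases_succ, Fin.val_succ]
      rw [show i.1 + (j.1 + 1) + m = i.1 + j.1 + (m + 1) by omega]
      ring
    rw [hsub]
    rw [show (Matrix.of (fun i j : Fin n =>
            RatFunc.X ^ (i.1 + 1 + m) * (qInt (j.1 + 1) *
              qFact (i.1 + j.1 + (m + 1)))))
        = Matrix.of (fun i j : Fin n => (fun i : Fin n => (RatFunc.X : RatFunc ℚ) ^ (i.1 + 1 + m)) i *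
            (Matrix.of (fun i j : Fin n => qInt (j.1 + 1) * qFact (i.1 + j.1 + (m + 1)))) i j) from rfl]
    rw [Matrix.det_mul_column]
    rw [show (Matrix.of (fun i j : Fin n => qInt (j.1 + 1) * qFact (i.1 + j.1 + (m + 1))))
        = Matrix.of (fun i j : Fin n => (fun j : Fin n => qInt (j.1 + 1)) j *
            (Matrix.of (fun i j : Fin n => qFact (i.1 + j.1 + (m + 1)))) i j) from rfl]
    rw [Matrix.det_mul_row]
    rw [ih (m + 1)]
    -- now pure algebra
    have hXprod : (∏ i : Fin n, (RatFunc.X : RatFunc ℚ) ^ (i.1 + 1 + m))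
        = RatFunc.X ^ (n.choose 2 + n + n * m) := by
      rw [Finset.prod_pow_eq_pow_sum]
      congr 1
      rw [Fin.sum_univ_eq_sum_range (fun i => i + 1 + m) n]
      simp only [Finset.sum_add_distrib, sum_range_id', Finset.sum_const, Finset.card_range,
        smul_eq_mul]
      omega
    have hqprod : (∏ j : Fin n, qInt (j.1 + 1)) = qFact n := by
      rw [qFact_eq_prod_range, Fin.prod_univ_eq_prod_range (fun j => qInt (j+1)) n]
    have hB00 : B 0 0 = qFact m := by simp [hB]
    rw [hXprod, hqprod, hB00]
    -- RHS products
    rw [Finset.prod_mul_distrib, Finset.prod_mul_distrib,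
      Finset.prod_range_succ' (fun k => qFact (k + m)) n,
      Finset.prod_range_succ (fun k => qFact k) n]
    have hshift : (∏ k ∈ Finset.range n, qFact (k + 1 + m))
        = ∏ k ∈ Finset.range n, qFact (k + (m + 1)) := by
      apply Finset.prod_congr rfl
      intro k _
      rw [show k + 1 + m = k + (m + 1) by omega]
    rw [hshift]
    have hexp : 2 * (n+1).choose 3 + (m + 1) * (n+1).choose 2
        = (n.choose 2 + n + n * m) + (2 * n.choose 3 + (m + 1 + 1) * n.choose 2) := by
      rw [choose_three_succ, choose_two_succ]
      ring
    rw [hexp, pow_add]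
    simp only [Fin.val_zero, pow_zero, one_mul, zero_add]
    ring

theorem stmt_16 (n m : ℕ) (hn : 1 ≤ n) :
    Matrix.det (Matrix.of (fun i j : Fin n => qFact (i.1 + j.1 + m)))
      = RatFunc.X ^ (2 * n.choose 3 + (m + 1) * n.choose 2) *
          ∏ k ∈ Finset.range n, qFact (k + m) * qFact k := by
  exact key n m
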